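/- For all integers n ≥ 1 and 1 ≤ k ≤ n-1, the constant c_{n,k} := |B_2^n|^{(n-k)/n} / |B_2^{n-k}| satisfies e^{-k/2} < c_{n,k} < 1, where |B_2^m| denotes the Lebesgue volume of the unit Euclidean ball in R^m. -/

import Mathlib

open MeasureTheory Metric

noncomputable section

/-- Volume of the unit Euclidean ball in `ℝ^m`. -/
def unitBallVol (m : ℕ) : ℝ :=
  (volume (ball (0 : EuclideanSpace ℝ (Fin m)) 1)).toReal

/-- The constant `c_{n,k} = |B_2^n|^{(n-k)/n} / |B_2^{n-k}|`. -/
def cnk (n k : ℕ) : ℝ :=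
  unitBallVol n ^ (((n : ℝ) - k) / n) / unitBallVol (n - k)

open Real Set

/-- Identity `log Γ x = log Γ (x+2) - log (x+1) - log x`. -/
lemma logGamma_identity {x : ℝ} (hx : 0 < x) :
    Real.log (Real.Gamma x) =
      Real.log (Real.Gamma (x + 2)) - Real.log (x + 1) - Real.log x := by
  have h1 : Real.Gamma (x + 1) = x * Real.Gamma x := Real.Gamma_add_one hx.ne'
  have h2 : Real.Gamma (x + 2) = (x + 1) * Real.Gamma (x + 1) := by
    have := Real.Gamma_add_one (s := x + 1) (by positivity)
    convert this using 2 <;> ring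
  rw [h2, h1, Real.log_mul (by positivity) (by positivity),
    Real.log_mul hx.ne' (Real.Gamma_pos_of_pos hx).ne']
  ring

/-- Strict convexity inequality for `log ∘ Γ`. -/
lemma logGamma_strict {x y a b : ℝ} (hx : 0 < x) (hy : 0 < y) (hxy : x ≠ y)
    (ha : 0 < a) (hb : 0 < b) (hab : a + b = 1) :
    Real.log (Real.Gamma (a * x + b * y)) <
      a * Real.log (Real.Gamma x) + b * Real.log (Real.Gamma y) := by
  have hz : 0 < a * x + b * y := by positivity
  have h1 : Real.log (Real.Gamma (a * x + b * y + 2)) ≤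
      a * Real.log (Real.Gamma (x + 2)) + b * Real.log (Real.Gamma (y + 2)) := by
    have := Real.convexOn_log_Gamma.2 (x := x + 2) (y := y + 2)
      (by simp; positivity) (by simp; positivity) ha.le hb.le hab
    simp only [smul_eq_mul, Function.comp_apply] at this
    have he : a * (x + 2) + b * (y + 2) = a * x + b * y + 2 := by
      have : a * 2 + b * 2 = 2 := by nlinarith
      ring_nf; nlinarith
    rw [he] at this
    exact this
  have h2 : a * Real.log (x + 1) + b * Real.log (y + 1) ≤
      Real.log (a * x + b * y + 1) := by
    have := strictConcaveOn_log_Ioi.concaveOn.2 (x := x + 1) (y := y + 1)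
      (by simp; positivity) (by simp; positivity) ha.le hb.le hab
    simp only [smul_eq_mul] at this
    have he : a * (x + 1) + b * (y + 1) = a * x + b * y + 1 := by nlinarith
    rw [he] at this
    exact this
  have h3 : a * Real.log x + b * Real.log y < Real.log (a * x + b * y) := by
    have := strictConcaveOn_log_Ioi.2 (mem_Ioi.2 hx) (mem_Ioi.2 hy) hxy ha hb hab
    simpa using this
  rw [logGamma_identity hx, logGamma_identity hy, logGamma_identity hz]
  nlinarith

/-- Induction step for the Stirling-type lower bound. -/
lemma stirling_step {x : ℝ} (hx : 1 ≤ x)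
    (h : x * (Real.log (x + 1) - 1) < Real.log (Real.Gamma (x + 1))) :
    (x + 1) * (Real.log (x + 2) - 1) < Real.log (Real.Gamma (x + 2)) := by
  have hx0 : (0 : ℝ) < x := by linarith
  have hG : Real.Gamma (x + 2) = (x + 1) * Real.Gamma (x + 1) := by
    have := Real.Gamma_add_one (s := x + 1) (by positivity)
    convert this using 2 <;> ring
  have hGpos : 0 < Real.Gamma (x + 1) := Real.Gamma_pos_of_pos (by positivity)
  have hlog : Real.log (Real.Gamma (x + 2)) =
      Real.log (x + 1) + Real.log (Real.Gamma (x + 1)) := by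
    rw [hG, Real.log_mul (by positivity) hGpos.ne']
  -- log (x+2) - log (x+1) ≤ 1/(x+1)
  have hq : Real.log (x + 2) - Real.log (x + 1) ≤ 1 / (x + 1) := by
    have h1 : Real.log ((x + 2) / (x + 1)) ≤ (x + 2) / (x + 1) - 1 :=
      Real.log_le_sub_one_of_pos (by positivity)
    rw [Real.log_div (by positivity) (by positivity)] at h1
    have h3 : (x + 2) / (x + 1) - 1 = 1 / (x + 1) := by
      field_simp
      norm_num
    linarith [h3 ▸ h1]
  have hx1 : (0 : ℝ) < x + 1 := by positivity
  have hq' : (x + 1) * (Real.log (x + 2) - Real.log (x + 1)) ≤ 1 := by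
    calc (x + 1) * (Real.log (x + 2) - Real.log (x + 1)) ≤ (x + 1) * (1 / (x + 1)) := by
          exact mul_le_mul_of_nonneg_left hq hx1.le
      _ = 1 := by field_simp
  rw [hlog]
  nlinarith

/-- Stirling-type lower bound: `log Γ (x+1) > x (log (x+1) - 1)` at half-integers `x ≥ 1`. -/
lemma stirling_key : ∀ j : ℕ,
    (((j : ℝ) + 2) / 2) * (Real.log ((((j : ℝ) + 2) / 2) + 1) - 1) <
      Real.log (Real.Gamma ((((j : ℝ) + 2) / 2) + 1)) := by
  intro j
  induction j using Nat.twoStepInduction with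
  | zero =>
      have hlog : Real.log 2 < 1 := by
        have h := Real.log_lt_log (by norm_num : (0:ℝ) < 2)
          (show (2:ℝ) < Real.exp 1 from lt_trans (by norm_num) Real.exp_one_gt_d9)
        rwa [Real.log_exp] at h
      have hx0 : (((0 : ℕ) : ℝ) + 2) / 2 = 1 := by norm_num
      rw [hx0, show (1:ℝ) + 1 = 2 by norm_num, Real.Gamma_two, Real.log_one, one_mul]
      linarith
  | one =>
      have h1 : Real.Gamma (3 / 2 : ℝ) = 1 / 2 * Real.sqrt π := by
        have h := Real.Gamma_add_one (s := (1 / 2 : ℝ)) (by norm_num)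
        rw [Real.Gamma_one_half_eq] at h
        rw [show (3/2 : ℝ) = 1/2 + 1 by norm_num, h]
      have hG : Real.Gamma (5 / 2 : ℝ) = 3 / 4 * Real.sqrt π := by
        have h := Real.Gamma_add_one (s := (3 / 2 : ℝ)) (by norm_num)
        rw [h1] at h
        rw [show (5/2 : ℝ) = 3/2 + 1 by norm_num, h]
        ring
      have hx : (((1 : ℕ) : ℝ) + 2) / 2 + 1 = 5 / 2 := by norm_num
      rw [hx]
      have hRHS : 0 < Real.log (Real.Gamma (5 / 2 : ℝ)) := by
        rw [hG]
        apply Real.log_pos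
        have hsq : (4 / 3 : ℝ) < Real.sqrt π := by
          rw [show (4/3 : ℝ) = 4/3 by norm_num]
          apply Real.lt_sqrt_of_sq_lt
          nlinarith [Real.pi_gt_three]
        nlinarith [hsq]
      have hlog : Real.log (5 / 2 : ℝ) < 1 := by
        have h := Real.log_lt_log (by norm_num : (0:ℝ) < 5/2)
          (show (5/2:ℝ) < Real.exp 1 from lt_trans (by norm_num) Real.exp_one_gt_d9)
        rwa [Real.log_exp] at h
      have : (((1 : ℕ) : ℝ) + 2) / 2 = 3 / 2 := by norm_num
      rw [this]
      nlinarith [hlog, hRHS]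
  | more j ih _ =>
      have hx : (1 : ℝ) ≤ ((j : ℝ) + 2) / 2 := by
        have : (0 : ℝ) ≤ (j : ℝ) := Nat.cast_nonneg j
        linarith
      have := stirling_step hx ih
      have hcast : (((j + 2 : ℕ) : ℝ) + 2) / 2 = ((j : ℝ) + 2) / 2 + 1 := by
        push_cast; ring
      rw [hcast]
      convert this using 3 <;> ring

lemma unitBallVol_eq (p : ℕ) (hp : 1 ≤ p) :
    unitBallVol p = Real.sqrt π ^ p / Real.Gamma ((p : ℝ) / 2 + 1) := by
  haveI : Nonempty (Fin p) := Fin.pos_iff_nonempty.mp hp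
  rw [unitBallVol, EuclideanSpace.volume_ball]
  have hΓ : 0 < Real.Gamma ((p : ℝ) / 2 + 1) := Real.Gamma_pos_of_pos (by positivity)
  rw [Fintype.card_fin] at *
  simp only [ENNReal.ofReal_one, one_pow, one_mul]
  rw [ENNReal.toReal_ofReal (by positivity)]

lemma unitBallVol_pos (p : ℕ) (hp : 1 ≤ p) : 0 < unitBallVol p := by
  rw [unitBallVol_eq p hp]
  have hΓ : 0 < Real.Gamma ((p : ℝ) / 2 + 1) := Real.Gamma_pos_of_pos (by positivity)
  have : (0 : ℝ) < Real.sqrt π := Real.sqrt_pos.2 Real.pi_pos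
  positivity

/-- For all `1 ≤ k ≤ n-1`, one has `e^{-k/2} < c_{n,k} < 1`. -/
theorem cnk_bounds (n k : ℕ) (hn : 1 ≤ n) (hk : 1 ≤ k) (hkn : k ≤ n - 1) :
    Real.exp (-(k : ℝ) / 2) < cnk n k ∧ cnk n k < 1 := by
  set m : ℕ := n - k with hm_def
  have hm1 : 1 ≤ m := by omega
  have hn2 : 2 ≤ n := by omega
  have hmn : m < n := by omega
  have hmk : m + k = n := by omega
  have hcast : (m : ℝ) + (k : ℝ) = (n : ℝ) := by exact_mod_cast congrArg (Nat.cast : ℕ → ℝ) hmk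
  have hnR : (0 : ℝ) < n := by positivity
  have hkR : (0 : ℝ) < k := by exact_mod_cast hk
  have hmR : (0 : ℝ) < m := by exact_mod_cast hm1
  set A : ℝ := Real.log (Real.Gamma ((n : ℝ) / 2 + 1)) with hA
  set B : ℝ := Real.log (Real.Gamma ((m : ℝ) / 2 + 1)) with hB
  have hΓn : 0 < Real.Gamma ((n : ℝ) / 2 + 1) := Real.Gamma_pos_of_pos (by positivity)
  have hΓm : 0 < Real.Gamma ((m : ℝ) / 2 + 1) := Real.Gamma_pos_of_pos (by positivity)
  have hsπ : (0 : ℝ) < Real.sqrt π := Real.sqrt_pos.2 Real.pi_pos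
  have hvn := unitBallVol_eq n (by omega)
  have hvm := unitBallVol_eq m hm1
  have hvnpos := unitBallVol_pos n (by omega)
  have hvmpos := unitBallVol_pos m hm1
  have hcpos : 0 < cnk n k := by
    rw [cnk, ← hm_def]
    exact div_pos (Real.rpow_pos_of_pos hvnpos _) hvmpos
  -- compute the logarithm of cnk
  have hr : ((n : ℝ) - k) / n = (m : ℝ) / n := by rw [← hcast]; ring_nf
  have hlogvn : Real.log (unitBallVol n) = n * Real.log (Real.sqrt π) - A := by
    rw [hvn, Real.log_div (by positivity) hΓn.ne', Real.log_pow, hA]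
  have hlogvm : Real.log (unitBallVol m) = m * Real.log (Real.sqrt π) - B := by
    rw [hvm, Real.log_div (by positivity) hΓm.ne', Real.log_pow, hB]
  have hlogc : Real.log (cnk n k) = B - ((m : ℝ) / n) * A := by
    rw [cnk, ← hm_def, Real.log_div (Real.rpow_pos_of_pos hvnpos _).ne' hvmpos.ne',
      Real.log_rpow hvnpos, hr, hlogvn, hlogvm]
    field_simp
    ring
  -- upper bound : B < (m/n) * A
  have hupper : B < ((m : ℝ) / n) * A := by
    have hkeq : (k : ℝ) = (n : ℝ) - m := by linarith
    have hstrict := logGamma_strict (x := (1 : ℝ)) (y := (n : ℝ) / 2 + 1)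
      one_pos (by positivity)
      (by intro h; linarith)
      (a := (k : ℝ) / n) (b := (m : ℝ) / n)
      (by positivity) (by positivity)
      (by rw [← add_div, show (k : ℝ) + m = n by linarith, div_self hnR.ne'])
    have he : (k : ℝ) / n * 1 + (m : ℝ) / n * ((n : ℝ) / 2 + 1) = (m : ℝ) / 2 + 1 := by
      rw [hkeq]
      field_simp
      ring
    rw [he, Real.Gamma_one, Real.log_one, mul_zero, zero_add] at hstrict
    exact hstrict
  -- slope bound : A - B ≤ (k/2) * log (n/2 + 1)
  set Llog : ℝ := Real.log ((n : ℝ) / 2 + 1) with hLlog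
  have hslope : A - B ≤ ((k : ℝ) / 2) * Llog := by
    have hsl := Real.convexOn_log_Gamma.slope_mono_adjacent
      (x := (m : ℝ) / 2 + 1) (y := (n : ℝ) / 2 + 1) (z := (n : ℝ) / 2 + 2)
      (Set.mem_Ioi.2 (by positivity)) (Set.mem_Ioi.2 (by positivity))
      (by have hmnR : (m : ℝ) < n := by exact_mod_cast hmn
          linarith)
      (by linarith)
    simp only [Function.comp_apply] at hsl
    have hz : Real.log (Real.Gamma ((n : ℝ) / 2 + 2)) = Llog + A := by
      have hrec := Real.Gamma_add_one (s := (n : ℝ) / 2 + 1) (by positivity)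
      have h2 : (n : ℝ) / 2 + 1 + 1 = (n : ℝ) / 2 + 2 := by ring
      rw [h2] at hrec
      rw [hrec, Real.log_mul (by positivity) hΓn.ne', hA, hLlog]
    rw [hz, ← hA, ← hB] at hsl
    have hy : (n : ℝ) / 2 + 1 - ((m : ℝ) / 2 + 1) = (k : ℝ) / 2 := by linarith
    have hz2 : (n : ℝ) / 2 + 2 - ((n : ℝ) / 2 + 1) = 1 := by ring
    rw [hy, hz2, div_one] at hsl
    have hk2 : (0 : ℝ) < (k : ℝ) / 2 := by positivity
    calc A - B = ((A - B) / ((k : ℝ) / 2)) * ((k : ℝ) / 2) := by field_simp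
      _ ≤ (Llog + A - A) * ((k : ℝ) / 2) := by
          apply mul_le_mul_of_nonneg_right hsl hk2.le
      _ = ((k : ℝ) / 2) * Llog := by ring
  -- Stirling-type bound : (n/2) * (Llog - 1) < A
  have hkey : ((n : ℝ) / 2) * (Llog - 1) < A := by
    have := stirling_key (n - 2)
    have hc2 : ((↑(n - 2) : ℝ) + 2) / 2 = (n : ℝ) / 2 := by
      have : ((n - 2 : ℕ) : ℝ) = (n : ℝ) - 2 := by
        push_cast [Nat.cast_sub hn2]; ring
      rw [this]; ring
    rw [hc2] at this
    exact this
  -- lower bound on log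
  have hlower : -(k : ℝ) / 2 < B - ((m : ℝ) / n) * A := by
    have hfrac : ((m : ℝ) / n) = 1 - (k : ℝ) / n := by
      field_simp; linarith
    have h1 : ((k : ℝ) / n) * (((n : ℝ) / 2) * (Llog - 1)) < ((k : ℝ) / n) * A :=
      mul_lt_mul_of_pos_left hkey (by positivity)
    have h2 : ((k : ℝ) / n) * (((n : ℝ) / 2) * (Llog - 1)) = ((k : ℝ) / 2) * (Llog - 1) := by
      field_simp
    have hexp : (1 - (k : ℝ) / n) * A = A - ((k : ℝ) / n) * A := by ring
    have h3 : (k : ℝ) / 2 * (Llog - 1) = (k : ℝ) / 2 * Llog - (k : ℝ) / 2 := by ring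
    rw [hfrac, hexp]
    linarith [h1, h2, h3, hslope]
  constructor
  · rw [← hlogc] at hlower
    calc Real.exp (-(k : ℝ) / 2) < Real.exp (Real.log (cnk n k)) := Real.exp_lt_exp.2 hlower
      _ = cnk n k := Real.exp_log hcpos
  · have : Real.log (cnk n k) < 0 := by rw [hlogc]; linarith
    exact (Real.log_neg_iff hcpos).1 this
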